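/- Let g₁, g₂ : [0,1] → ℝ be concave, vanishing at 0 with limit 0 at 0⁺, g₂ positive on (0,1). If the limit lim_{x→0⁺} g₁(x)/g₂(x) exists and is finite, and (𝒫ₙ) is a sequence of finite partitions with H(g₂,𝒫ₙ) → ∞, then limsup_n (1/n) H(g₁,𝒫ₙ) = (lim_{x→0⁺} g₁(x)/g₂(x)) · limsup_n (1/n) H(g₂,𝒫ₙ), whenever the latter limsup is finite. -/

import Mathlib

open MeasureTheory Filter


lemma slope_anti {g : ℝ → ℝ} (hc : ConcaveOn ℝ (Set.Icc 0 1) g) (h0 : g 0 = 0)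
    {x y : ℝ} (hx : 0 < x) (hxy : x ≤ y) (hy : y ≤ 1) : x * g y ≤ y * g x := by
  have hy0 : 0 < y := lt_of_lt_of_le hx hxy
  have hd1 : x / y ≤ 1 := (div_le_one hy0).2 hxy
  have hd0 : 0 ≤ x / y := by positivity
  have h1 : (1 - x / y) • g 0 + (x / y) • g y ≤ g ((1 - x / y) • (0:ℝ) + (x / y) • y) :=
    hc.2 (Set.mem_Icc.2 ⟨le_rfl, zero_le_one⟩) (Set.mem_Icc.2 ⟨hy0.le, hy⟩)
      (by linarith) hd0 (by ring)
  have hxy' : (x / y) * y = x := div_mul_cancel₀ x hy0.ne'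
  simp only [smul_eq_mul, h0, mul_zero, zero_add, hxy'] at h1
  have h2 := mul_le_mul_of_nonneg_left h1 hy0.le
  have h3 : y * (x / y * g y) = x * g y := by field_simp
  linarith

lemma abs_bound {g : ℝ → ℝ} (hc : ConcaveOn ℝ (Set.Icc 0 1) g) (h0 : g 0 = 0)
    {δ t : ℝ} (hδ : 0 < δ) (hδ1 : δ ≤ 1) (ht : t ∈ Set.Icc δ 1) :
    |g t| ≤ |g δ| / δ + |g 1| := by
  obtain ⟨ht1, ht2⟩ := ht
  have ht0 : 0 ≤ t := le_trans hδ.le ht1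
  have h1 : δ * g t ≤ t * g δ := slope_anti hc h0 hδ ht1 ht2
  have h2 : t * g 1 ≤ 1 * g t := slope_anti hc h0 (lt_of_lt_of_le hδ ht1) ht2 le_rfl
  have hdnn : 0 ≤ |g δ| / δ := div_nonneg (abs_nonneg _) hδ.le
  rw [abs_le]
  constructor
  · -- lower bound: g t ≥ t * g 1 ≥ -|g 1|
    have k1 : t * (-|g 1|) ≤ t * g 1 := mul_le_mul_of_nonneg_left (neg_abs_le _) ht0
    have k2 : t * |g 1| ≤ 1 * |g 1| := mul_le_mul_of_nonneg_right ht2 (abs_nonneg _)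
    nlinarith
  · -- upper bound: δ g t ≤ t g δ ≤ |g δ|
    have k1 : t * g δ ≤ t * |g δ| := mul_le_mul_of_nonneg_left (le_abs_self _) ht0
    have k2 : t * |g δ| ≤ 1 * |g δ| := mul_le_mul_of_nonneg_right ht2 (abs_nonneg _)
    have k3 : δ * g t ≤ |g δ| := by linarith
    have k4 : g t ≤ |g δ| / δ := by rw [le_div_iff₀ hδ]; linarith
    linarith [abs_nonneg (g 1)]

lemma sum_meas_le_one {X : Type*} [MeasurableSpace X] (μ : Measure X) [IsProbabilityMeasure μ]
    (Q : Finset (Set X)) (hmeas : ∀ A ∈ Q, MeasurableSet A)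
    (hdisj : (Q : Set (Set X)).PairwiseDisjoint id) :
    ∑ A ∈ Q, (μ A).toReal ≤ 1 := by
  rw [← ENNReal.toReal_sum (fun A _ => measure_ne_top μ A)]
  have h := measure_biUnion_finset (μ := μ) hdisj hmeas
  simp only [id] at h
  rw [← h, ← ENNReal.toReal_one]
  exact ENNReal.toReal_mono ENNReal.one_ne_top prob_le_one

lemma sum_toReal_eq_one {X : Type*} [MeasurableSpace X] (μ : Measure X) [IsProbabilityMeasure μ]
    (Q : Finset (Set X)) (hmeas : ∀ A ∈ Q, MeasurableSet A)
    (hdisj : (Q : Set (Set X)).PairwiseDisjoint id)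
    (hcover : ⋃₀ (Q : Set (Set X)) = Set.univ) :
    ∑ A ∈ Q, (μ A).toReal = 1 := by
  rw [← ENNReal.toReal_sum (fun A _ => measure_ne_top μ A)]
  have h := measure_biUnion_finset (μ := μ) hdisj hmeas
  simp only [id] at h
  have huniv : (⋃ b ∈ Q, b) = Set.univ := by rw [← hcover]; simp [Set.sUnion_eq_biUnion]
  rw [← h, huniv, measure_univ, ENNReal.toReal_one]

lemma card_large {X : Type*} [MeasurableSpace X] (μ : Measure X) [IsProbabilityMeasure μ]
    (Q : Finset (Set X)) (hmeas : ∀ A ∈ Q, MeasurableSet A)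
    (hdisj : (Q : Set (Set X)).PairwiseDisjoint id)
    {δ : ℝ} (hδ : 0 < δ) :
    ((Q.filter (fun A => δ ≤ (μ A).toReal)).card : ℝ) ≤ 1 / δ := by
  set S := Q.filter (fun A => δ ≤ (μ A).toReal) with hS
  have hsub : S ⊆ Q := Finset.filter_subset _ _
  have h1 : S.card • δ ≤ ∑ A ∈ S, (μ A).toReal :=
    Finset.card_nsmul_le_sum S _ δ (fun A hA => (Finset.mem_filter.1 hA).2)
  rw [nsmul_eq_mul] at h1
  have h2 : ∑ A ∈ S, (μ A).toReal ≤ 1 :=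
    sum_meas_le_one μ S (fun A hA => hmeas A (hsub hA)) (hdisj.subset (by exact_mod_cast hsub))
  rw [le_div_iff₀ hδ]
  linarith


lemma limsup_eq_mul {a b : ℕ → ℝ} {L h₂ : ℝ} (hL : 0 ≤ L) (hh : 0 ≤ h₂)
    (hb0 : ∀ᶠ n in atTop, 0 ≤ b n)
    (hblt : ∀ c, h₂ < c → ∀ᶠ n in atTop, b n < c)
    (hbfr : ∀ c, c < h₂ → ∃ᶠ n in atTop, c < b n)
    (hest : ∀ ε : ℝ, 0 < ε → ∀ᶠ n in atTop, |a n - L * b n| ≤ ε * b n + ε) :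
    Filter.limsup a Filter.atTop = L * h₂ ∧
      Filter.IsBoundedUnder (· ≤ ·) Filter.atTop a ∧
      Filter.IsBoundedUnder (· ≥ ·) Filter.atTop a := by
  have key : ∀ ε : ℝ, 0 < ε →
      (∀ᶠ n in atTop, a n ≤ L * (h₂ + ε) + (ε * (h₂ + ε) + ε)) ∧
      (∀ᶠ n in atTop, -(ε * (h₂ + ε) + ε) ≤ a n) ∧
      (∃ᶠ n in atTop, L * (h₂ - ε) - (ε * (h₂ + ε) + ε) ≤ a n) := by
    intro ε hε
    have hev : ∀ᶠ n in atTop, 0 ≤ b n ∧ b n < h₂ + ε ∧ |a n - L * b n| ≤ ε * b n + ε :=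
      hb0.and ((hblt (h₂ + ε) (by linarith)).and (hest ε hε))
    refine ⟨hev.mono ?_, hev.mono ?_, ((hbfr (h₂ - ε) (by linarith)).and_eventually hev).mono ?_⟩
    · rintro n ⟨h1, h2, h3⟩
      have hLb : L * b n ≤ L * (h₂ + ε) := mul_le_mul_of_nonneg_left h2.le hL
      have hεb : ε * b n ≤ ε * (h₂ + ε) := mul_le_mul_of_nonneg_left h2.le hε.le
      have := abs_le.1 h3
      linarith [this.2]
    · rintro n ⟨h1, h2, h3⟩
      have hLb : 0 ≤ L * b n := mul_nonneg hL h1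
      have hεb : ε * b n ≤ ε * (h₂ + ε) := mul_le_mul_of_nonneg_left h2.le hε.le
      have := abs_le.1 h3
      linarith [this.1]
    · rintro n ⟨hfr, h1, h2, h3⟩
      have hLb : L * (h₂ - ε) ≤ L * b n := mul_le_mul_of_nonneg_left hfr.le hL
      have hεb : ε * b n ≤ ε * (h₂ + ε) := mul_le_mul_of_nonneg_left h2.le hε.le
      have := abs_le.1 h3
      linarith [this.1]
  obtain ⟨e1, e2, e3⟩ := key 1 one_pos
  have hba : Filter.IsBoundedUnder (· ≤ ·) Filter.atTop a := ⟨_, e1⟩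
  have hbb : Filter.IsBoundedUnder (· ≥ ·) Filter.atTop a := ⟨_, e2⟩
  have hcob : Filter.IsCoboundedUnder (· ≤ ·) Filter.atTop a :=
    hbb.isCoboundedUnder_le
  refine ⟨?_, hba, hbb⟩
  have hbound : ∀ ε : ℝ, 0 < ε → |Filter.limsup a atTop - L * h₂| ≤ ε * (L + h₂ + ε + 2) := by
    intro ε hε
    obtain ⟨k1, k2, k3⟩ := key ε hε
    have hup : Filter.limsup a atTop ≤ L * (h₂ + ε) + (ε * (h₂ + ε) + ε) :=
      Filter.limsup_le_of_le hcob k1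
    have hlo : L * (h₂ - ε) - (ε * (h₂ + ε) + ε) ≤ Filter.limsup a atTop :=
      Filter.le_limsup_of_frequently_le k3 hba
    rw [abs_le]
    constructor <;> nlinarith
  by_contra hne
  have hd : 0 < |Filter.limsup a atTop - L * h₂| := by
    rw [abs_pos]; intro h; exact hne (by linarith [sub_eq_zero.1 h])
  set d := |Filter.limsup a atTop - L * h₂| with hdd
  have hC : (0:ℝ) < L + h₂ + 1 + 2 := by linarith
  set ε := min 1 (d / (2 * (L + h₂ + 1 + 2))) with hεd
  have hε1 : ε ≤ 1 := min_le_left _ _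
  have hε0 : 0 < ε := lt_min one_pos (by positivity)
  have h1 := hbound ε hε0
  have h2 : ε * (L + h₂ + ε + 2) ≤ ε * (L + h₂ + 1 + 2) :=
    mul_le_mul_of_nonneg_left (by linarith) hε0.le
  have h3 : ε * (L + h₂ + 1 + 2) ≤ (d / (2 * (L + h₂ + 1 + 2))) * (L + h₂ + 1 + 2) :=
    mul_le_mul_of_nonneg_right (min_le_right _ _) (by linarith)
  have h4 : (d / (2 * (L + h₂ + 1 + 2))) * (L + h₂ + 1 + 2) = d / 2 := by
    field_simp
  linarith

lemma limsup_coe_ereal {a : ℕ → ℝ} (hba : Filter.IsBoundedUnder (· ≤ ·) Filter.atTop a)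
    (hbb : Filter.IsBoundedUnder (· ≥ ·) Filter.atTop a) :
    Filter.limsup (fun n => ((a n : ℝ) : EReal)) Filter.atTop
      = ((Filter.limsup a Filter.atTop : ℝ) : EReal) :=
  (Monotone.map_limsup_of_continuousAt (F := atTop) EReal.coe_strictMono.monotone a
    (continuous_coe_real_ereal.continuousAt) hba hbb.isCoboundedUnder_le).symm

lemma key_est {X : Type*} [MeasurableSpace X] (μ : Measure X) [IsProbabilityMeasure μ]
    (g₁ g₂ : ℝ → ℝ)
    (hc1 : ConcaveOn ℝ (Set.Icc 0 1) g₁) (h01 : g₁ 0 = 0)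
    (hc2 : ConcaveOn ℝ (Set.Icc 0 1) g₂) (h02 : g₂ 0 = 0)
    (hpos : ∀ x ∈ Set.Ioo (0:ℝ) 1, 0 < g₂ x)
    (L : ℝ)
    (hL : Filter.Tendsto (fun x : ℝ => g₁ x / g₂ x) (nhdsWithin 0 (Set.Ioo 0 1)) (nhds L))
    {ε : ℝ} (hε : 0 < ε) :
    ∃ K : ℝ, ∀ (Q : Finset (Set X)), (∀ A ∈ Q, MeasurableSet A) →
      (Q : Set (Set X)).PairwiseDisjoint id →
      |(∑ A ∈ Q, g₁ (μ A).toReal) - L * ∑ A ∈ Q, g₂ (μ A).toReal|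
        ≤ ε * (∑ A ∈ Q, g₂ (μ A).toReal) + K := by
  rw [Metric.tendsto_nhdsWithin_nhds] at hL
  obtain ⟨δ, hδpos, hδ⟩ := hL ε hε
  set δ₀ : ℝ := min δ (1/2) with hδ₀def
  have hδ₀pos : 0 < δ₀ := lt_min hδpos (by norm_num)
  have hδ₀half : δ₀ ≤ 1/2 := min_le_right _ _
  have hδ₀1 : δ₀ ≤ 1 := by linarith
  set M₁ : ℝ := |g₁ δ₀| / δ₀ + |g₁ 1| with hM₁def
  set M₂ : ℝ := |g₂ δ₀| / δ₀ + |g₂ 1| with hM₂def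
  have hM₁0 : 0 ≤ M₁ := by positivity
  have hM₂0 : 0 ≤ M₂ := by positivity
  refine ⟨ε * M₂ / δ₀ + (M₁ + |L| * M₂) / δ₀, ?_⟩
  intro Q hmeas hdisj
  have hx01 : ∀ A ∈ Q, (μ A).toReal ∈ Set.Icc (0:ℝ) 1 := by
    intro A hA
    exact ⟨ENNReal.toReal_nonneg, by
      rw [← ENNReal.toReal_one]; exact ENNReal.toReal_mono ENNReal.one_ne_top prob_le_one⟩
  set p : Set X → Prop := fun A => δ₀ ≤ (μ A).toReal with hpdef
  classical
  set S := Q.filter p with hSdef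
  -- termwise bound on large atoms
  have hlarge : ∀ A ∈ S, |g₁ (μ A).toReal - L * g₂ (μ A).toReal| ≤ M₁ + |L| * M₂ := by
    intro A hA
    obtain ⟨hAQ, hAp⟩ := Finset.mem_filter.1 hA
    have hxI : (μ A).toReal ∈ Set.Icc δ₀ 1 := ⟨hAp, (hx01 A hAQ).2⟩
    have b1 := abs_bound hc1 h01 hδ₀pos hδ₀1 hxI
    have b2 := abs_bound hc2 h02 hδ₀pos hδ₀1 hxI
    calc |g₁ (μ A).toReal - L * g₂ (μ A).toReal|
        ≤ |g₁ (μ A).toReal| + |L * g₂ (μ A).toReal| := abs_sub _ _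
      _ = |g₁ (μ A).toReal| + |L| * |g₂ (μ A).toReal| := by rw [abs_mul]
      _ ≤ M₁ + |L| * M₂ :=
          add_le_add b1 (mul_le_mul_of_nonneg_left b2 (abs_nonneg L))
  -- termwise bound on small atoms
  have hsmall : ∀ A ∈ Q, ¬ p A →
      |g₁ (μ A).toReal - L * g₂ (μ A).toReal| ≤ ε * g₂ (μ A).toReal := by
    intro A hA hAp
    set x := (μ A).toReal with hxdef
    have hx0 : 0 ≤ x := (hx01 A hA).1
    have hxlt : x < δ₀ := lt_of_not_ge hAp
    rcases eq_or_lt_of_le hx0 with h | h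
    · rw [← h, h01, h02]; simp
    · have hxIoo : x ∈ Set.Ioo (0:ℝ) 1 := ⟨h, by linarith⟩
      have hdist : dist x 0 < δ := by
        rw [Real.dist_eq, sub_zero, abs_of_pos h]
        exact lt_of_lt_of_le hxlt (min_le_left _ _)
      have hratio := hδ hxIoo hdist
      rw [Real.dist_eq] at hratio
      have hg2 : 0 < g₂ x := hpos x hxIoo
      have heq : g₁ x - L * g₂ x = (g₁ x / g₂ x - L) * g₂ x := by
        field_simp
      rw [heq, abs_mul, abs_of_pos hg2]
      exact mul_le_mul_of_nonneg_right hratio.le hg2.le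
  have habs : |(∑ A ∈ Q, g₁ (μ A).toReal) - L * ∑ A ∈ Q, g₂ (μ A).toReal|
      ≤ ∑ A ∈ Q, |g₁ (μ A).toReal - L * g₂ (μ A).toReal| := by
    rw [Finset.mul_sum, ← Finset.sum_sub_distrib]
    exact Finset.abs_sum_le_sum_abs _ _
  have hsplit : ∑ A ∈ Q, |g₁ (μ A).toReal - L * g₂ (μ A).toReal|
      = (∑ A ∈ S, |g₁ (μ A).toReal - L * g₂ (μ A).toReal|)
        + ∑ A ∈ Q.filter (fun A => ¬ p A), |g₁ (μ A).toReal - L * g₂ (μ A).toReal| :=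
    (Finset.sum_filter_add_sum_filter_not Q p _).symm
  have hcard : (S.card : ℝ) ≤ 1 / δ₀ := card_large μ Q hmeas hdisj hδ₀pos
  have hSbound : ∑ A ∈ S, |g₁ (μ A).toReal - L * g₂ (μ A).toReal| ≤ (M₁ + |L| * M₂) / δ₀ := by
    calc ∑ A ∈ S, |g₁ (μ A).toReal - L * g₂ (μ A).toReal|
        ≤ ∑ _A ∈ S, (M₁ + |L| * M₂) := Finset.sum_le_sum hlarge
      _ = (S.card : ℝ) * (M₁ + |L| * M₂) := by rw [Finset.sum_const, nsmul_eq_mul]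
      _ ≤ (1/δ₀) * (M₁ + |L| * M₂) := by
          apply mul_le_mul_of_nonneg_right hcard
          positivity
      _ = (M₁ + |L| * M₂) / δ₀ := by ring
  have hTbound : ∑ A ∈ Q.filter (fun A => ¬ p A), |g₁ (μ A).toReal - L * g₂ (μ A).toReal|
      ≤ ε * ∑ A ∈ Q.filter (fun A => ¬ p A), g₂ (μ A).toReal := by
    rw [Finset.mul_sum]
    apply Finset.sum_le_sum
    intro A hA
    obtain ⟨hAQ, hAp⟩ := Finset.mem_filter.1 hA
    exact hsmall A hAQ hAp
  -- the sum of g₂ over small atoms is at most the total plus M₂/δ₀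
  have hSg2 : -(M₂ / δ₀) ≤ ∑ A ∈ S, g₂ (μ A).toReal := by
    have h1 : ∀ A ∈ S, -M₂ ≤ g₂ (μ A).toReal := by
      intro A hA
      obtain ⟨hAQ, hAp⟩ := Finset.mem_filter.1 hA
      have := abs_bound hc2 h02 hδ₀pos hδ₀1 ⟨hAp, (hx01 A hAQ).2⟩
      exact (abs_le.1 this).1
    calc -(M₂/δ₀) ≤ -((S.card : ℝ) * M₂) := by
          rw [neg_le_neg_iff]
          calc (S.card : ℝ) * M₂ ≤ (1/δ₀) * M₂ := mul_le_mul_of_nonneg_right hcard hM₂0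
            _ = M₂/δ₀ := by ring
      _ = ∑ _A ∈ S, (-M₂) := by rw [Finset.sum_const, nsmul_eq_mul]; ring
      _ ≤ ∑ A ∈ S, g₂ (μ A).toReal := Finset.sum_le_sum h1
  have hTg2 : ∑ A ∈ Q.filter (fun A => ¬ p A), g₂ (μ A).toReal
      ≤ (∑ A ∈ Q, g₂ (μ A).toReal) + M₂ / δ₀ := by
    have := Finset.sum_filter_add_sum_filter_not Q p (fun A => g₂ (μ A).toReal)
    linarith
  have hfinal : ε * ∑ A ∈ Q.filter (fun A => ¬ p A), g₂ (μ A).toReal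
      ≤ ε * (∑ A ∈ Q, g₂ (μ A).toReal) + ε * M₂ / δ₀ := by
    have h1 := mul_le_mul_of_nonneg_left hTg2 hε.le
    have h2 : ε * ((∑ A ∈ Q, g₂ (μ A).toReal) + M₂ / δ₀)
        = ε * (∑ A ∈ Q, g₂ (μ A).toReal) + ε * M₂ / δ₀ := by ring
    linarith
  linarith

theorem limsup_g_entropy_eq (X : Type*) [MeasurableSpace X]
    (μ : Measure X) [IsProbabilityMeasure μ]
    (g₁ g₂ : ℝ → ℝ)
    (hc1 : ConcaveOn ℝ (Set.Icc 0 1) g₁) (h01 : g₁ 0 = 0)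
    (hl1 : Filter.Tendsto g₁ (nhdsWithin 0 (Set.Ioi 0)) (nhds 0))
    (hc2 : ConcaveOn ℝ (Set.Icc 0 1) g₂) (h02 : g₂ 0 = 0)
    (hl2 : Filter.Tendsto g₂ (nhdsWithin 0 (Set.Ioi 0)) (nhds 0))
    (hpos : ∀ x ∈ Set.Ioo (0:ℝ) 1, 0 < g₂ x)
    (P : ℕ → Finset (Set X))
    (hmeas : ∀ n, ∀ A ∈ P n, MeasurableSet A)
    (hdisj : ∀ n, (P n : Set (Set X)).PairwiseDisjoint id)
    (hcover : ∀ n, ⋃₀ (P n : Set (Set X)) = Set.univ)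
    (L h₂ : ℝ)
    (hL : Filter.Tendsto (fun x : ℝ => g₁ x / g₂ x)
        (nhdsWithin 0 (Set.Ioo 0 1)) (nhds L))
    (hH2inf : Filter.Tendsto (fun n => ∑ A ∈ P n, g₂ (μ A).toReal)
        Filter.atTop Filter.atTop)
    (hh2 : Filter.limsup
        (fun n : ℕ => (((1 / (n:ℝ)) * ∑ A ∈ P n, g₂ (μ A).toReal : ℝ) : EReal))
        Filter.atTop = (h₂ : EReal)) :
    Filter.limsup
        (fun n : ℕ => (((1 / (n:ℝ)) * ∑ A ∈ P n, g₁ (μ A).toReal : ℝ) : EReal))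
        Filter.atTop = ((L * h₂ : ℝ) : EReal) := by
  classical
  set S₁ : ℕ → ℝ := fun n => ∑ A ∈ P n, g₁ (μ A).toReal with hS₁def
  set S₂ : ℕ → ℝ := fun n => ∑ A ∈ P n, g₂ (μ A).toReal with hS₂def
  set a : ℕ → ℝ := fun n => (1 / (n:ℝ)) * S₁ n with hadef
  set b : ℕ → ℝ := fun n => (1 / (n:ℝ)) * S₂ n with hbdef
  -- sums of measures are 1
  have hsum1 : ∀ n, ∑ A ∈ P n, (μ A).toReal = 1 := fun n =>
    sum_toReal_eq_one μ (P n) (hmeas n) (hdisj n) (hcover n)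
  have hx01 : ∀ n, ∀ A ∈ P n, (μ A).toReal ∈ Set.Icc (0:ℝ) 1 := by
    intro n A hA
    exact ⟨ENNReal.toReal_nonneg, by
      rw [← ENNReal.toReal_one]; exact ENNReal.toReal_mono ENNReal.one_ne_top prob_le_one⟩
  -- Step C : 0 ≤ L
  have claim1 : ∀ c : ℝ, ∃ x ∈ Set.Ioo (0:ℝ) 1, c * x < g₂ x := by
    intro c
    by_contra hcon
    push_neg at hcon
    have hbd : ∀ n, S₂ n ≤ |c| + |g₂ 1| := by
      intro n
      have : ∀ A ∈ P n, g₂ (μ A).toReal ≤ (|c| + |g₂ 1|) * (μ A).toReal := by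
        intro A hA
        obtain ⟨h0, h1⟩ := hx01 n A hA
        rcases eq_or_lt_of_le h0 with he | hgt
        · rw [← he, h02]; simp
        rcases eq_or_lt_of_le h1 with he | hlt
        · rw [he, mul_one]
          calc g₂ 1 ≤ |g₂ 1| := le_abs_self _
            _ ≤ |c| + |g₂ 1| := by linarith [abs_nonneg c]
        · have := hcon ((μ A).toReal) ⟨hgt, hlt⟩
          calc g₂ (μ A).toReal ≤ c * (μ A).toReal := this
            _ ≤ |c| * (μ A).toReal := mul_le_mul_of_nonneg_right (le_abs_self _) h0
            _ ≤ (|c| + |g₂ 1|) * (μ A).toReal := by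
                apply mul_le_mul_of_nonneg_right _ h0
                linarith [abs_nonneg (g₂ 1)]
      calc S₂ n ≤ ∑ A ∈ P n, (|c| + |g₂ 1|) * (μ A).toReal := Finset.sum_le_sum this
        _ = (|c| + |g₂ 1|) * ∑ A ∈ P n, (μ A).toReal := by rw [Finset.mul_sum]
        _ = |c| + |g₂ 1| := by rw [hsum1 n, mul_one]
    obtain ⟨n, hn⟩ := (hH2inf.eventually_gt_atTop (|c| + |g₂ 1|)).exists
    exact absurd (hbd n) (not_le.2 hn)
  have hratio0 : Filter.Tendsto (fun x : ℝ => x / g₂ x)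
      (nhdsWithin 0 (Set.Ioo 0 1)) (nhds 0) := by
    rw [Metric.tendsto_nhdsWithin_nhds]
    intro ε hε
    obtain ⟨x₀, hx₀I, hx₀⟩ := claim1 (2/ε)
    refine ⟨x₀, hx₀I.1, ?_⟩
    rintro x ⟨hx0, hx1⟩ hdist
    rw [Real.dist_eq, sub_zero, abs_of_pos hx0] at hdist
    have hslope : x * g₂ x₀ ≤ x₀ * g₂ x := slope_anti hc2 h02 hx0 hdist.le hx₀I.2.le
    have hg2x : 0 < g₂ x := hpos x ⟨hx0, hx1⟩
    have hgx : 2/ε * x < g₂ x := by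
      have h1 : (2/ε * x₀) * x < g₂ x₀ * x := by
        apply mul_lt_mul_of_pos_right hx₀ hx0
      nlinarith [hx₀I.1]
    rw [Real.dist_eq, sub_zero, abs_of_pos (div_pos hx0 hg2x)]
    rw [div_lt_iff₀ hg2x]
    have hmul : ε * (2/ε * x) = 2 * x := by field_simp
    nlinarith [mul_lt_mul_of_pos_left hgx hε]
  have hL0 : 0 ≤ L := by
    haveI : (nhdsWithin (0:ℝ) (Set.Ioo 0 1)).NeBot := by
      apply mem_closure_iff_nhdsWithin_neBot.1
      rw [closure_Ioo (by norm_num : (0:ℝ) ≠ 1)]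
      exact ⟨le_rfl, zero_le_one⟩
    have htend : Filter.Tendsto (fun x : ℝ => g₁ 1 * (x / g₂ x))
        (nhdsWithin 0 (Set.Ioo 0 1)) (nhds 0) := by
      have := hratio0.const_mul (g₁ 1)
      simpa using this
    refine le_of_tendsto_of_tendsto htend hL ?_
    filter_upwards [self_mem_nhdsWithin] with x hx
    obtain ⟨hx0, hx1⟩ := hx
    have hg2x : 0 < g₂ x := hpos x ⟨hx0, hx1⟩
    have hslope : x * g₁ 1 ≤ 1 * g₁ x := slope_anti hc1 h01 hx0 hx1.le le_rfl
    have hdiv : (x * g₁ 1) / g₂ x ≤ g₁ x / g₂ x := by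
      exact (div_le_div_iff_of_pos_right hg2x).2 (by linarith)
    calc g₁ 1 * (x / g₂ x) = (x * g₁ 1) / g₂ x := by ring
      _ ≤ g₁ x / g₂ x := hdiv
  -- b facts
  have hb0 : ∀ᶠ n in atTop, 0 ≤ b n := by
    filter_upwards [hH2inf.eventually_ge_atTop 0] with n hn
    exact mul_nonneg (by positivity) hn
  have hblt : ∀ c, h₂ < c → ∀ᶠ n in atTop, b n < c := by
    intro c hc
    have : Filter.limsup (fun n : ℕ => ((b n : ℝ) : EReal)) Filter.atTop < (c : EReal) := by
      rw [hh2]; exact_mod_cast hc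
    filter_upwards [Filter.eventually_lt_of_limsup_lt this] with n hn
    exact_mod_cast hn
  have hbfr : ∀ c, c < h₂ → ∃ᶠ n in atTop, c < b n := by
    intro c hc
    have : (c : EReal) < Filter.limsup (fun n : ℕ => ((b n : ℝ) : EReal)) Filter.atTop := by
      rw [hh2]; exact_mod_cast hc
    apply (Filter.frequently_lt_of_lt_limsup (by isBoundedDefault) this).mono
    intro n hn
    exact_mod_cast hn
  have hh20 : 0 ≤ h₂ := by
    by_contra hcon
    push_neg at hcon
    obtain ⟨n, hn0, hnlt⟩ := (hb0.and (hblt (h₂/2) (by linarith))).exists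
    linarith
  -- the estimate
  have hest : ∀ ε : ℝ, 0 < ε → ∀ᶠ n in atTop, |a n - L * b n| ≤ ε * b n + ε := by
    intro ε hε
    obtain ⟨K, hK⟩ := key_est μ g₁ g₂ hc1 h01 hc2 h02 hpos L hL hε
    have hKn : ∀ᶠ n : ℕ in atTop, K / (n:ℝ) ≤ ε := by
      have h1 : Filter.Tendsto (fun n : ℕ => K / (n:ℝ)) atTop (nhds 0) :=
        tendsto_const_div_atTop_nhds_zero_nat K
      filter_upwards [h1.eventually (eventually_le_nhds hε)] with n hn using hn
    filter_upwards [hKn, Filter.eventually_ge_atTop 1] with n hKn' hn1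
    have hnpos : (0:ℝ) < (n:ℝ) := by exact_mod_cast hn1
    have hinv : 0 ≤ 1 / (n:ℝ) := by positivity
    have h2 : |a n - L * b n| = (1 / (n:ℝ)) * |S₁ n - L * S₂ n| := by
      rw [← abs_of_nonneg hinv, ← abs_mul]
      congr 1
      simp only [hadef, hbdef]
      ring
    rw [h2]
    calc (1 / (n:ℝ)) * |S₁ n - L * S₂ n|
        ≤ (1 / (n:ℝ)) * (ε * S₂ n + K) :=
          mul_le_mul_of_nonneg_left (hK (P n) (hmeas n) (hdisj n)) hinv
      _ = ε * b n + K / (n:ℝ) := by simp only [hbdef]; ring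
      _ ≤ ε * b n + ε := by linarith
  obtain ⟨hlim, hba, hbb⟩ := limsup_eq_mul hL0 hh20 hb0 hblt hbfr hest
  calc Filter.limsup (fun n : ℕ => ((a n : ℝ) : EReal)) Filter.atTop
      = ((Filter.limsup a Filter.atTop : ℝ) : EReal) := limsup_coe_ereal hba hbb
    _ = ((L * h₂ : ℝ) : EReal) := by rw [hlim]
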